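/- Fix a finite set A of cardinality at least 2, a vector θ⁰ and a nonzero vector θ¹ in ℝ^N with bounded entries, and a family of distinct feature vectors f(a) ∈ ℝ^N for a ∈ A such that the map a ↦ (θ¹)ᵀ f(a) is not constant. Then the function t ↦ -(θ⁰ + tθ¹)ᵀ f(x) + log(Σ_{a∈A} exp((θ⁰ + tθ¹)ᵀ f(a))) has strictly positive second derivative at every t ∈ ℝ, for any fixed x ∈ A. -/

import Mathlib

/-- Strict Cauchy–Schwarz / positive variance: if the weights are positive and
the values `d` are not all equal, the variance is strictly positive. -/
lemma var_pos' {A : Type*} [Fintype A] (e d : A → ℝ) (he : ∀ a, 0 < e a)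
    {a b : A} (hab : d a ≠ d b) :
    (∑ c, e c * d c) ^ 2 < (∑ c, e c * d c ^ 2) * (∑ c, e c) := by
  have hne : Nonempty A := ⟨a⟩
  have hS : 0 < ∑ c, e c :=
    Finset.sum_pos (fun c _ => he c) Finset.univ_nonempty
  set S := ∑ c, e c with hSdef
  set M := ∑ c, e c * d c with hMdef
  set Q := ∑ c, e c * d c ^ 2 with hQdef
  set m := M / S with hmdef
  have expand : ∑ c, (d c - m) ^ 2 * e c = Q - 2 * m * M + m ^ 2 * S := by
    have : ∀ c : A, (d c - m) ^ 2 * e c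
        = e c * d c ^ 2 - 2 * m * (e c * d c) + m ^ 2 * e c := by
      intro c; ring
    rw [Finset.sum_congr rfl (fun c _ => this c)]
    rw [Finset.sum_add_distrib, Finset.sum_sub_distrib, ← Finset.mul_sum,
      ← Finset.mul_sum]
  have hwit : ∃ c : A, d c ≠ m := by
    by_cases h : d a = m
    · exact ⟨b, fun hb => hab (h.trans hb.symm)⟩
    · exact ⟨a, h⟩
  obtain ⟨c0, hc0⟩ := hwit
  have hpos : 0 < ∑ c, (d c - m) ^ 2 * e c := by
    apply Finset.sum_pos' (fun c _ => mul_nonneg (sq_nonneg _) (he c).le)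
    refine ⟨c0, Finset.mem_univ _, ?_⟩
    have h0 : d c0 - m ≠ 0 := sub_ne_zero.mpr hc0
    exact mul_pos (by positivity) (he c0)
  rw [expand] at hpos
  have hm : m * S = M := by
    rw [hmdef, div_mul_cancel₀ M hS.ne']
  nlinarith [sq_nonneg (m * S - M), hS]

theorem stmt_3 {A : Type*} [Fintype A] (hA : 2 ≤ Fintype.card A) (N : ℕ)
    (θ0 θ1 : Fin N → ℝ) (hθ1 : θ1 ≠ 0)
    (f : A → Fin N → ℝ) (hf : Function.Injective f)
    (hnc : ∃ a b : A, (∑ i, θ1 i * f a i) ≠ (∑ i, θ1 i * f b i))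
    (x : A) (t : ℝ) :
    0 < iteratedDeriv 2
      (fun s => -(∑ i, (θ0 i + s * θ1 i) * f x i) +
        Real.log (∑ a : A, Real.exp (∑ i, (θ0 i + s * θ1 i) * f a i))) t := by
  classical
  have hne : Nonempty A := by
    rw [← Fintype.card_pos_iff]; omega
  set b : A → ℝ := fun a => ∑ i, θ0 i * f a i with hbdef
  set d : A → ℝ := fun a => ∑ i, θ1 i * f a i with hddef
  have hlin : ∀ (s : ℝ) (a : A),
      (∑ i, (θ0 i + s * θ1 i) * f a i) = b a + s * d a := by
    intro s a
    simp [hbdef, hddef, add_mul, Finset.sum_add_distrib, Finset.mul_sum,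
      mul_assoc]
  have hfun : (fun s => -(∑ i, (θ0 i + s * θ1 i) * f x i) +
        Real.log (∑ a : A, Real.exp (∑ i, (θ0 i + s * θ1 i) * f a i)))
      = (fun s => -(b x + s * d x) +
        Real.log (∑ a : A, Real.exp (b a + s * d a))) := by
    funext s
    simp only [hlin]
  rw [hfun]
  set F : ℝ → ℝ := fun s => ∑ a : A, Real.exp (b a + s * d a) with hF
  set F1 : ℝ → ℝ := fun s => ∑ a : A, Real.exp (b a + s * d a) * d a with hF1
  set F2 : ℝ → ℝ := fun s => ∑ a : A, Real.exp (b a + s * d a) * d a ^ 2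
    with hF2
  have haff : ∀ (s : ℝ) (a : A),
      HasDerivAt (fun u => b a + u * d a) (d a) s := by
    intro s a
    simpa using ((hasDerivAt_id s).mul_const (d a)).const_add (b a)
  have hFpos : ∀ s, 0 < F s :=
    fun s => Finset.sum_pos (fun a _ => Real.exp_pos _) Finset.univ_nonempty
  have hFd : ∀ s, HasDerivAt F (F1 s) s := by
    intro s
    exact HasDerivAt.fun_sum fun a _ => ((haff s a).exp)
  have hF1d : ∀ s, HasDerivAt F1 (F2 s) s := by
    intro s
    apply HasDerivAt.fun_sum
    intro a _
    have := ((haff s a).exp).mul_const (d a)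
    simpa [mul_assoc, sq] using this
  have hg : ∀ s, HasDerivAt
      (fun u => -(b x + u * d x) + Real.log (∑ a : A, Real.exp (b a + u * d a)))
      (-d x + F1 s / F s) s := by
    intro s
    have h1 : HasDerivAt (fun u : ℝ => -(b x + u * d x)) (-d x) s :=
      (haff s x).neg
    have h2 : HasDerivAt (fun u => Real.log (F u)) (F1 s / F s) s :=
      (hFd s).log (ne_of_gt (hFpos s))
    exact h1.add h2
  have hderiv : deriv (fun u => -(b x + u * d x) +
      Real.log (∑ a : A, Real.exp (b a + u * d a)))
      = fun s => -d x + F1 s / F s :=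
    funext fun s => (hg s).deriv
  have hg2 : HasDerivAt (fun s => -d x + F1 s / F s)
      ((F2 t * F t - F1 t * F1 t) / (F t) ^ 2) t := by
    have := ((hF1d t).div (hFd t) (ne_of_gt (hFpos t))).const_add (-d x)
    simpa using this
  rw [iteratedDeriv_succ, iteratedDeriv_one, hderiv, hg2.deriv]
  apply div_pos
  · obtain ⟨a0, b0, hab⟩ := hnc
    have := var_pos' (fun a => Real.exp (b a + t * d a)) d
      (fun a => Real.exp_pos _) hab
    simp only [hF, hF1, hF2]
    nlinarith [this]
  · positivity
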